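/- arXiv:1106.4587 — 2 statements merged into one kernel-verified Lean document; each statement's English description precedes it below -/
import Mathlib

section
/- Let G = (V, E) be a finite simple graph with maximum degree bounded by d and treewidth bounded by h. Then for every ε ∈ (0,1/2) there exists a positive integer k with k ≤ K(d, h, ε) for some function K depending only on d, h, and ε (in particular independent of |V|), and a partition of V into parts each of size at most k such that the number of edges of G whose endpoints lie in different parts is at most ε|V|. Concretely, one may take any k satisfying k ≥ 2886000·d⁵·(2h+3)!·(1 + log k + log((2h+3)!))/ε³. -/
/-- `(bags, T)` is a tree decomposition of `G`: `T` is a forest on the index set of the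
family of bags; every vertex appears in some bag; every edge is contained in some bag;
and for every vertex the set of bags containing it induces a connected subgraph of `T`. -/
def IsTreeDecomposition {V : Type} {m : ℕ} (G : SimpleGraph V)
    (bags : Fin m → Finset V) (T : SimpleGraph (Fin m)) : Prop :=
  T.IsAcyclic ∧
  (∀ v : V, ∃ i, v ∈ bags i) ∧
  (∀ u v : V, G.Adj u v → ∃ i, u ∈ bags i ∧ v ∈ bags i) ∧
  (∀ v : V, (T.induce {i : Fin m | v ∈ bags i}).Connected)

/-- `G` has treewidth at most `h`: some tree decomposition has all bags of size ≤ `h + 1`. -/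
def HasTreewidthLE {V : Type} (G : SimpleGraph V) (h : ℕ) : Prop :=
  ∃ (m : ℕ) (bags : Fin m → Finset V) (T : SimpleGraph (Fin m)),
    IsTreeDecomposition G bags T ∧ ∀ i, (bags i).card ≤ h + 1

open SimpleGraph

variable {m : ℕ}

/-- The set of tree-nodes reachable from `x` after deleting the edge `s(j,x)`. -/
def Dset (T : SimpleGraph (Fin m)) (j x : Fin m) : Set (Fin m) :=
  {y | (T.deleteEdges {s(j,x)}).Reachable x y}

lemma self_mem_Dset (T : SimpleGraph (Fin m)) (j x : Fin m) : x ∈ Dset T j x :=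
  Reachable.refl x

lemma not_mem_Dset (T : SimpleGraph (Fin m)) (hA : T.IsAcyclic) {j x : Fin m}
    (hjx : T.Adj j x) : j ∉ Dset T j x := by
  have hb := isAcyclic_iff_forall_adj_isBridge.mp hA hjx
  rw [isBridge_iff] at hb
  intro hr
  exact hb hr.symm

lemma reach_decomp (T : SimpleGraph (Fin m)) (H : SimpleGraph (Fin m)) (hle : H ≤ T)
    {j y : Fin m} (hr : H.Reachable j y) :
    y = j ∨ ∃ x, H.Adj j x ∧ y ∈ Dset T j x := by
  obtain ⟨w⟩ := hr
  obtain ⟨p, hp⟩ := w.toPath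
  clear w
  cases p with
  | nil => exact Or.inl rfl
  | @cons _ x _ hadj tail =>
    right
    rw [Walk.cons_isPath_iff] at hp
    refine ⟨x, hadj, ?_⟩
    have hcond : ∀ e ∈ tail.edges, e ∈ (T.deleteEdges {s(j,x)}).edgeSet := by
      intro e he
      rw [edgeSet_deleteEdges]
      refine ⟨edgeSet_mono hle (tail.edges_subset_edgeSet he), ?_⟩
      intro hmem
      rw [Set.mem_singleton_iff] at hmem
      subst hmem
      exact hp.2 (tail.fst_mem_support_of_mem_edges he)
    exact ⟨tail.transfer _ hcond⟩

lemma sym2_ne {i j x : Fin m} (hij : i ≠ j) (hxi : x ≠ i) : s(j,x) ≠ s(i,j) := by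
  intro hcontra
  rcases Sym2.eq_iff.mp hcontra with ⟨h1, h2⟩ | ⟨h1, h2⟩
  · exact hij h1.symm
  · exact hxi h2

lemma Dset_subset_Dset (T : SimpleGraph (Fin m)) (hA : T.IsAcyclic) {i j x : Fin m}
    (hij : T.Adj i j) (hjx : T.Adj j x) (hxi : x ≠ i) :
    Dset T j x ⊆ Dset T i j := by
  intro y hy
  obtain ⟨w⟩ := hy
  have hjw : s(i,j) ∉ w.edges := by
    intro he
    have hj : j ∈ w.support := w.snd_mem_support_of_mem_edges he
    exact not_mem_Dset T hA hjx ⟨w.takeUntil j hj⟩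
  have hcond : ∀ e ∈ w.edges, e ∈ (T.deleteEdges {s(i,j)}).edgeSet := by
    intro e he
    rw [edgeSet_deleteEdges]
    refine ⟨edgeSet_mono (deleteEdges_le _) (w.edges_subset_edgeSet he), ?_⟩
    intro hmem
    rw [Set.mem_singleton_iff] at hmem
    subst hmem
    exact hjw he
  have hadj' : (T.deleteEdges {s(i,j)}).Adj j x := by
    rw [deleteEdges_adj]
    exact ⟨hjx, by simpa using sym2_ne hij.ne hxi⟩
  exact ⟨Walk.cons hadj' (w.transfer _ hcond)⟩

lemma Dset_ncard_lt (T : SimpleGraph (Fin m)) (hA : T.IsAcyclic) {i j x : Fin m}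
    (hij : T.Adj i j) (hjx : T.Adj j x) (hxi : x ≠ i) :
    (Dset T j x).ncard < (Dset T i j).ncard := by
  apply Set.ncard_lt_ncard _ (Set.toFinite _)
  constructor
  · exact Dset_subset_Dset T hA hij hjx hxi
  · intro hsub
    exact not_mem_Dset T hA hjx (hsub (self_mem_Dset T i j))

section Bags

variable {V : Type} (bags : Fin m → Finset V) (T : SimpleGraph (Fin m))

/-- The vertices of `R` appearing in some bag of `Ds`. -/
def VR (R : Set V) (Ds : Set (Fin m)) : Set V :=
  {v | v ∈ R ∧ ∃ y ∈ Ds, v ∈ bags y}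

lemma VR_subset (R : Set V) (Ds : Set (Fin m)) : VR bags R Ds ⊆ R := fun _ h => h.1

lemma VR_mono (R : Set V) {Ds Ds' : Set (Fin m)} (h : Ds ⊆ Ds') :
    VR bags R Ds ⊆ VR bags R Ds' := by
  rintro v ⟨hv, y, hy, hvy⟩
  exact ⟨hv, y, h hy, hvy⟩

lemma walk_in_bags (hconn : ∀ v : V, (T.induce {i : Fin m | v ∈ bags i}).Connected)
    (v : V) {y₀ y : Fin m} (h₀ : v ∈ bags y₀) (h₁ : v ∈ bags y) :
    ∃ w : T.Walk y₀ y, ∀ z ∈ w.support, v ∈ bags z := by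
  obtain ⟨w⟩ := (hconn v).preconnected ⟨y₀, h₀⟩ ⟨y, h₁⟩
  refine ⟨w.map (SimpleGraph.Embedding.induce _).toHom, ?_⟩
  intro z hz
  replace hz : z ∈ w.support.map (SimpleGraph.Embedding.induce (G := T) {i : Fin m | v ∈ bags i}).toHom := by
    rw [← Walk.support_map]; exact hz
  obtain ⟨z', _, rfl⟩ := List.mem_map.mp hz
  exact z'.2

lemma mem_Dset_of_mem_bags (hconn : ∀ v : V, (T.induce {i : Fin m | v ∈ bags i}).Connected)
    {j x : Fin m} {v : V} (hvj : v ∉ bags j) {y₀ : Fin m} (h₀ : v ∈ bags y₀)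
    (hy₀ : y₀ ∈ Dset T j x) {y : Fin m} (h₁ : v ∈ bags y) : y ∈ Dset T j x := by
  obtain ⟨w, hw⟩ := walk_in_bags bags T hconn v h₀ h₁
  by_cases he : s(j,x) ∈ w.edges
  · exact absurd (hw j (w.fst_mem_support_of_mem_edges he)) hvj
  · have hcond : ∀ e ∈ w.edges, e ∉ ({s(j,x)} : Set (Sym2 (Fin m))) := by
      intro e he' hmem
      rw [Set.mem_singleton_iff] at hmem
      exact he (hmem ▸ he')
    exact hy₀.trans ⟨w.toDeleteEdges _ hcond⟩

/-- Separation: a vertex of a chunk not in the root bag has all its `R`-neighbors in the chunk. -/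
lemma chunk_closed {G : SimpleGraph V}
    (hconn : ∀ v : V, (T.induce {i : Fin m | v ∈ bags i}).Connected)
    (hedge : ∀ u v : V, G.Adj u v → ∃ i, u ∈ bags i ∧ v ∈ bags i)
    (R : Set V) {j x : Fin m} {v : V} (hv : v ∈ VR bags R (Dset T j x))
    (hvj : v ∉ bags j) {u : V} (hu : u ∈ R) (huv : G.Adj v u) :
    u ∈ VR bags R (Dset T j x) := by
  obtain ⟨hvR, y₀, hy₀, hvy₀⟩ := hv
  obtain ⟨y, hvy, huy⟩ := hedge v u huv
  exact ⟨hu, y, mem_Dset_of_mem_bags bags T hconn hvj hvy₀ hy₀ hvy, huy⟩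

end Bags

section Greedy

variable {V α : Type} [Finite V]

lemma biUnion_cons (a : α) (L : List α) (f : α → Set V) :
    ⋃ x ∈ {y | y ∈ a :: L}, f x = f a ∪ ⋃ x ∈ {y | y ∈ L}, f x := by
  have : {y | y ∈ a :: L} = insert a {y | y ∈ L} := by
    ext z; simp [List.mem_cons]
  rw [this, Set.biUnion_insert]

lemma greedy (k : ℕ) :
    ∀ (L : List α) (S₀ : Set V) (f : α → Set V),
      2 * S₀.ncard < k + k →
      (∀ a ∈ L, 2 * (f a).ncard < k) →
      k ≤ 2 * (S₀ ∪ ⋃ a ∈ {x | x ∈ L}, f a).ncard →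
      ∃ W : Set V, S₀ ⊆ W ∧ W ⊆ S₀ ∪ ⋃ a ∈ {x | x ∈ L}, f a ∧
        k ≤ 2 * W.ncard ∧ W.ncard ≤ k ∧
        ∀ v ∈ W, v ∈ S₀ ∨ ∃ a, a ∈ L ∧ f a ⊆ W ∧ v ∈ f a := by
  intro L
  induction L with
  | nil =>
    intro S₀ f hS hf htot
    refine ⟨S₀, subset_rfl, Set.subset_union_left, ?_, ?_, fun v hv => Or.inl hv⟩
    · simpa using htot
    · omega
  | cons a L2 ih =>
    intro S₀ f hS hf htot
    by_cases hstop : k ≤ 2 * S₀.ncard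
    · exact ⟨S₀, subset_rfl, Set.subset_union_left, hstop, by omega, fun v hv => Or.inl hv⟩
    · have hfa : 2 * (f a).ncard < k := hf a List.mem_cons_self
      have hS' : 2 * (S₀ ∪ f a).ncard < k + k := by
        have := Set.ncard_union_le S₀ (f a)
        omega
      have hrw : S₀ ∪ ⋃ x ∈ {y | y ∈ a :: L2}, f x
          = (S₀ ∪ f a) ∪ ⋃ x ∈ {y | y ∈ L2}, f x := by
        rw [biUnion_cons, ← Set.union_assoc]
      have htot' : k ≤ 2 * ((S₀ ∪ f a) ∪ ⋃ x ∈ {y | y ∈ L2}, f x).ncard := by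
        rw [← hrw]; exact htot
      obtain ⟨W, hW1, hW2, hW3, hW4, hW5⟩ :=
        ih (S₀ ∪ f a) f hS' (fun b hb => hf b (List.mem_cons_of_mem a hb)) htot'
      refine ⟨W, Set.subset_union_left.trans hW1, by rw [hrw]; exact hW2, hW3, hW4, ?_⟩
      intro v hv
      rcases hW5 v hv with hv' | ⟨b, hb1, hb2, hb3⟩
      · rcases hv' with h | h
        · exact Or.inl h
        · exact Or.inr ⟨a, List.mem_cons_self, (Set.subset_union_right).trans hW1, h⟩
      · exact Or.inr ⟨b, List.mem_cons_of_mem a hb1, hb2, hb3⟩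

end Greedy

section Key

variable {V : Type} [Finite V] {m : ℕ}

lemma assemble (G : SimpleGraph V) (bags : Fin m → Finset V) (T : SimpleGraph (Fin m))
    (hedge : ∀ u v : V, G.Adj u v → ∃ i, u ∈ bags i ∧ v ∈ bags i)
    (hconn : ∀ v : V, (T.induce {i : Fin m | v ∈ bags i}).Connected)
    (h k : ℕ) (hbag : ∀ i, (bags i).card ≤ h + 1) (hk : 2 * (h + 1) ≤ k)
    (R : Set V) (j : Fin m) (ok : Fin m → Prop)
    (hsmall : ∀ x, ok x → 2 * (VR bags R (Dset T j x)).ncard < k)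
    (VRbig : Set V)
    (hbig : k ≤ 2 * VRbig.ncard)
    (hcover : VRbig ⊆ (↑(bags j) ∩ R) ∪ ⋃ x ∈ {x | ok x}, VR bags R (Dset T j x)) :
    ∃ S W : Set V, S ⊆ W ∧ W ⊆ R ∧ W.Nonempty ∧ W.ncard ≤ k ∧
      k * S.ncard ≤ 2 * (h + 1) * W.ncard ∧
      (∀ v ∈ W, v ∉ S → ∀ u ∈ R, G.Adj v u → u ∈ W) := by
  classical
  set S₀ : Set V := ↑(bags j) ∩ R with hS₀def
  set f : Fin m → Set V := fun x => if ok x then VR bags R (Dset T j x) else ∅ with hfdef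
  set L : List (Fin m) := (Finset.univ : Finset (Fin m)).toList with hLdef
  have hfeq : ∀ x, ok x → f x = VR bags R (Dset T j x) := by
    intro x hx
    simp [hfdef, hx]
  have hS₀card : S₀.ncard ≤ h + 1 := by
    calc S₀.ncard ≤ (↑(bags j) : Set V).ncard :=
          Set.ncard_le_ncard Set.inter_subset_left (Set.toFinite _)
      _ = (bags j).card := Set.ncard_coe_finset _
      _ ≤ h + 1 := hbag j
  have hS : 2 * S₀.ncard < k + k := by omega
  have hf : ∀ a ∈ L, 2 * (f a).ncard < k := by
    intro a _
    by_cases hok : ok a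
    · simpa [hfdef, hok] using hsmall a hok
    · simp [hfdef, hok]
      omega
  have hsub : VRbig ⊆ S₀ ∪ ⋃ a ∈ {x | x ∈ L}, f a := by
    intro v hv
    rcases hcover hv with hv' | hv'
    · exact Or.inl hv'
    · simp only [Set.mem_iUnion] at hv'
      obtain ⟨x, hokx, hvx⟩ := hv'
      have hok' : ok x := hokx
      refine Or.inr (Set.mem_biUnion (show x ∈ {y | y ∈ L} by simp [hLdef]) ?_)
      rw [hfeq x hok']
      exact hvx
  have htot : k ≤ 2 * (S₀ ∪ ⋃ a ∈ {x | x ∈ L}, f a).ncard := by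
    have := Set.ncard_le_ncard hsub (Set.toFinite _)
    omega
  obtain ⟨W, hW1, hW2, hW3, hW4, hW5⟩ := greedy k L S₀ f hS hf htot
  have hfR : ∀ a, f a ⊆ R := by
    intro a
    by_cases hok : ok a
    · simp only [hfdef, if_pos hok]; exact VR_subset bags R _
    · simp [hfdef, hok]
  have hWR : W ⊆ R := by
    intro v hv
    rcases hW2 hv with hv' | hv'
    · exact hv'.2
    · simp only [Set.mem_iUnion] at hv'
      obtain ⟨a, _, hva⟩ := hv'
      exact hfR a hva
  refine ⟨S₀, W, hW1, hWR, ?_, hW4, ?_, ?_⟩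
  · have : 0 < W.ncard := by omega
    exact Set.nonempty_of_ncard_ne_zero (by omega)
  · calc k * S₀.ncard ≤ k * (h + 1) := Nat.mul_le_mul_left k hS₀card
      _ = (h + 1) * k := Nat.mul_comm _ _
      _ ≤ (h + 1) * (2 * W.ncard) := Nat.mul_le_mul_left _ hW3
      _ = 2 * (h + 1) * W.ncard := by ring
  · intro v hvW hvS u hu huv
    rcases hW5 v hvW with hv' | ⟨a, haL, hfaW, hvfa⟩
    · exact absurd hv' hvS
    · have hoka : ok a := by
        by_contra hok
        simp [hfdef, hok] at hvfa
      rw [hfeq a hoka] at hvfa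
      have hvj : v ∉ bags j := by
        intro hvj
        exact hvS ⟨hvj, (VR_subset bags R _ hvfa)⟩
      have := chunk_closed bags T hconn hedge R hvfa hvj hu huv
      apply hfaW
      rw [hfeq a hoka]
      exact this

end Key

section Key2

variable {V : Type} [Finite V] {m : ℕ}

lemma key (G : SimpleGraph V) (bags : Fin m → Finset V) (T : SimpleGraph (Fin m))
    (hA : T.IsAcyclic)
    (hcov : ∀ v : V, ∃ i, v ∈ bags i)
    (hedge : ∀ u v : V, G.Adj u v → ∃ i, u ∈ bags i ∧ v ∈ bags i)
    (hconn : ∀ v : V, (T.induce {i : Fin m | v ∈ bags i}).Connected)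
    (h k : ℕ) (hbag : ∀ i, (bags i).card ≤ h + 1) (hk : 2 * (h + 1) ≤ k)
    (R : Set V) (hR : R.Nonempty) :
    ∃ S W : Set V, S ⊆ W ∧ W ⊆ R ∧ W.Nonempty ∧ W.ncard ≤ k ∧
      k * S.ncard ≤ 2 * (h + 1) * W.ncard ∧
      (∀ v ∈ W, v ∉ S → ∀ u ∈ R, G.Adj v u → u ∈ W) := by
  classical
  by_cases hP : ∃ p : Fin m × Fin m, T.Adj p.1 p.2 ∧
      k ≤ 2 * (VR bags R (Dset T p.1 p.2)).ncard
  · -- some chunk is big: take a minimal one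
    obtain ⟨p₀, hp₀⟩ := hP
    set s : Finset (Fin m × Fin m) := Finset.univ.filter
      (fun p => T.Adj p.1 p.2 ∧ k ≤ 2 * (VR bags R (Dset T p.1 p.2)).ncard) with hsdef
    have hp₀s : p₀ ∈ s := by simp [hsdef, hp₀.1, hp₀.2]
    obtain ⟨q, hqs, hqmin⟩ := Finset.exists_min_image s
      (fun p => (Dset T p.1 p.2).ncard) ⟨p₀, hp₀s⟩
    simp only [hsdef, Finset.mem_filter] at hqs
    obtain ⟨-, hij, hbig⟩ := hqs
    set i := q.1
    set j := q.2
    refine assemble G bags T hedge hconn h k hbag hk R j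
      (fun x => T.Adj j x ∧ x ≠ i) ?_ (VR bags R (Dset T i j)) hbig ?_
    · -- children are small
      rintro x ⟨hjx, hxi⟩
      by_contra hge
      push_neg at hge
      have hmem : (j, x) ∈ s := by simp [hsdef, hjx, hge]
      have := hqmin (j, x) hmem
      have hlt := Dset_ncard_lt T hA hij hjx hxi
      simp only at this
      omega
    · -- cover
      rintro v ⟨hvR, y, hy, hvy⟩
      rcases reach_decomp T (T.deleteEdges {s(i,j)}) (deleteEdges_le _) hy with
        rfl | ⟨x, hadj, hyx⟩
      · exact Or.inl ⟨hvy, hvR⟩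
      · rw [deleteEdges_adj] at hadj
        have hxi : x ≠ i := by
          rintro rfl
          exact hadj.2 (by simp [Sym2.eq_swap])
        refine Or.inr ?_
        refine Set.mem_biUnion (show x ∈ {y | T.Adj j y ∧ y ≠ i} from ⟨hadj.1, hxi⟩) ?_
        exact ⟨hvR, y, hyx, hvy⟩
  · -- all chunks are small
    push_neg at hP
    obtain ⟨v₀, hv₀⟩ := hR
    obtain ⟨i₀, hi₀⟩ := hcov v₀
    set Comp := VR bags R {y | T.Reachable i₀ y} with hCompdef
    by_cases hbig : k ≤ 2 * Comp.ncard
    · refine assemble G bags T hedge hconn h k hbag hk R i₀ (fun x => T.Adj i₀ x) ?_ Comp hbig ?_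
      · intro x hx
        have := hP (i₀, x)
        simp only at this
        have := this hx
        omega
      · rintro v ⟨hvR, y, hy, hvy⟩
        rcases reach_decomp T T le_rfl hy with rfl | ⟨x, hadj, hyx⟩
        · exact Or.inl ⟨hvy, hvR⟩
        · exact Or.inr (Set.mem_biUnion hadj ⟨hvR, y, hyx, hvy⟩)
    · -- the whole component is small: it is a perfect chunk
      refine ⟨∅, Comp, Set.empty_subset _, VR_subset bags R _, ?_, ?_, ?_, ?_⟩
      · exact ⟨v₀, hv₀, i₀, Reachable.refl i₀, hi₀⟩
      · omega
      · simp
      · rintro v ⟨hvR, y, hy, hvy⟩ - u hu huv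
        obtain ⟨y', hvy', huy'⟩ := hedge v u huv
        obtain ⟨w, -⟩ := walk_in_bags bags T hconn v hvy hvy'
        exact ⟨hu, y', hy.trans ⟨w⟩, huy'⟩

end Key2

section Main

variable {V : Type} [Finite V] {m : ℕ}

lemma mainrec (G : SimpleGraph V) (bags : Fin m → Finset V) (T : SimpleGraph (Fin m))
    (hA : T.IsAcyclic)
    (hcov : ∀ v : V, ∃ i, v ∈ bags i)
    (hedge : ∀ u v : V, G.Adj u v → ∃ i, u ∈ bags i ∧ v ∈ bags i)
    (hconn : ∀ v : V, (T.induce {i : Fin m | v ∈ bags i}).Connected)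
    (h k : ℕ) (hbag : ∀ i, (bags i).card ≤ h + 1) (hk : 2 * (h + 1) ≤ k) :
    ∀ (n : ℕ) (R : Set V), R.ncard ≤ n →
    ∃ (p : V → Set V) (B : Set V),
      (∀ v ∈ R, v ∈ p v) ∧ (∀ v ∈ R, p v ⊆ R) ∧ (∀ v ∈ R, ∀ w ∈ p v, p w = p v) ∧
      (∀ v ∈ R, (p v).ncard ≤ k) ∧ B ⊆ R ∧ k * B.ncard ≤ 2 * (h + 1) * R.ncard ∧
      (∀ u v, u ∈ R → v ∈ R → G.Adj u v → p u ≠ p v → u ∈ B ∨ v ∈ B) := by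
  classical
  intro n
  induction n with
  | zero =>
    intro R hR
    refine ⟨fun v => if v ∈ R then R else {v}, ∅, ?_, ?_, ?_, ?_, Set.empty_subset _, by simp, ?_⟩
    · intro v hv; simp [hv]
    · intro v hv; simp [hv]
    · intro v hv w hw
      simp only [if_pos hv] at hw
      simp [hv, hw]
    · intro v hv; simp [hv]; omega
    · intro u v hu hv _ hne
      exact absurd (by simp [hu, hv]) hne
  | succ n ih =>
    intro R hR
    by_cases hRk : R.ncard ≤ k
    · refine ⟨fun v => if v ∈ R then R else {v}, ∅, ?_, ?_, ?_, ?_, Set.empty_subset _, by simp, ?_⟩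
      · intro v hv; simp [hv]
      · intro v hv; simp [hv]
      · intro v hv w hw
        simp only [if_pos hv] at hw
        simp [hv, hw]
      · intro v hv; simpa [hv] using hRk
      · intro u v hu hv _ hne
        exact absurd (by simp [hu, hv]) hne
    · have hRne : R.Nonempty := by
        rw [← Set.ncard_pos (Set.toFinite _)]
        omega
      obtain ⟨S, W, hSW, hWR, hWne, hWk, hScard, hsep⟩ :=
        key G bags T hA hcov hedge hconn h k hbag hk R hRne
      have hWpos : 0 < W.ncard := (Set.ncard_pos (Set.toFinite _)).mpr hWne
      have hdiff : (R \ W).ncard = R.ncard - W.ncard := Set.ncard_diff hWR (Set.toFinite _)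
      have hWle : W.ncard ≤ R.ncard := Set.ncard_le_ncard hWR (Set.toFinite _)
      obtain ⟨p', B', ih1, ih2, ih3, ih4, ih5, ih6, ih7⟩ := ih (R \ W) (by omega)
      refine ⟨fun v => if v ∈ W then W else p' v, B' ∪ S, ?_, ?_, ?_, ?_, ?_, ?_, ?_⟩
      · intro v hv
        by_cases hvW : v ∈ W
        · simp [hvW]
        · simpa [hvW] using ih1 v ⟨hv, hvW⟩
      · intro v hv
        by_cases hvW : v ∈ W
        · simpa [hvW] using hWR
        · simp only [if_neg hvW]
          exact (ih2 v ⟨hv, hvW⟩).trans Set.diff_subset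
      · intro v hv w hw
        by_cases hvW : v ∈ W
        · simp only [if_pos hvW] at hw
          simp [hw, hvW]
        · simp only [if_neg hvW] at hw
          have hw' : w ∈ R \ W := ih2 v ⟨hv, hvW⟩ hw
          simp only [if_neg hw'.2, if_neg hvW]
          exact ih3 v ⟨hv, hvW⟩ w hw
      · intro v hv
        by_cases hvW : v ∈ W
        · simpa [hvW] using hWk
        · simpa [hvW] using ih4 v ⟨hv, hvW⟩
      · exact Set.union_subset (ih5.trans Set.diff_subset) (hSW.trans hWR)
      · have h1 : (B' ∪ S).ncard ≤ B'.ncard + S.ncard := Set.ncard_union_le _ _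
        calc k * (B' ∪ S).ncard ≤ k * (B'.ncard + S.ncard) := Nat.mul_le_mul_left _ h1
          _ = k * B'.ncard + k * S.ncard := Nat.mul_add _ _ _
          _ ≤ 2 * (h + 1) * (R \ W).ncard + 2 * (h + 1) * W.ncard := Nat.add_le_add ih6 hScard
          _ = 2 * (h + 1) * ((R \ W).ncard + W.ncard) := (Nat.mul_add _ _ _).symm
          _ = 2 * (h + 1) * R.ncard := by
              congr 1
              omega
      · intro u v hu hv hadj hne
        by_cases huW : u ∈ W
        · by_cases hvW : v ∈ W
          · exact absurd (by simp [huW, hvW]) hne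
          · by_cases huS : u ∈ S
            · exact Or.inl (Set.mem_union_right _ huS)
            · exact absurd (hsep u huW huS v hv hadj) hvW
        · by_cases hvW : v ∈ W
          · by_cases hvS : v ∈ S
            · exact Or.inr (Set.mem_union_right _ hvS)
            · exact absurd (hsep v hvW hvS u hu hadj.symm) huW
          · have hne' : p' u ≠ p' v := by simpa [huW, hvW] using hne
            rcases ih7 u v ⟨hu, huW⟩ ⟨hv, hvW⟩ hadj hne' with h' | h'
            · exact Or.inl (Set.mem_union_left _ h')
            · exact Or.inr (Set.mem_union_left _ h')

end Main

section Count

lemma ncard_biUnion_le_mul {α β : Type} [Finite α] [Finite β] (f : α → Set β) (d : ℕ)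
    (hf : ∀ a, (f a).ncard ≤ d) (B : Set α) :
    (⋃ a ∈ B, f a).ncard ≤ B.ncard * d := by
  refine Set.Finite.induction_on B (Set.toFinite B) (by simp) ?_
  intro a s ha hs hind
  have : ⋃ x ∈ insert a s, f x = f a ∪ ⋃ x ∈ s, f x := by
    simp [Set.biUnion_insert]
  rw [this, Set.ncard_insert_of_notMem ha (Set.toFinite _)]
  calc (f a ∪ ⋃ x ∈ s, f x).ncard ≤ (f a).ncard + (⋃ x ∈ s, f x).ncard :=
        Set.ncard_union_le _ _
    _ ≤ d + s.ncard * d := Nat.add_le_add (hf a) hind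
    _ = (s.ncard + 1) * d := by ring

lemma incidence_ncard_le {V : Type} [Finite V] (G : SimpleGraph V) (d : ℕ)
    (hdeg : ∀ v : V, (G.neighborSet v).ncard ≤ d) (v : V) :
    (G.incidenceSet v).ncard ≤ d := by
  classical
  have : (G.incidenceSet v).ncard = (G.neighborSet v).ncard := by
    rw [← Nat.card_coe_set_eq, ← Nat.card_coe_set_eq]
    exact Nat.card_congr (G.incidenceSetEquivNeighborSet v)
  rw [this]
  exact hdeg v

end Count

section Numeric

lemma exists_good_k (C F ε : ℝ) (hC : 0 ≤ C) (hF : 1 ≤ F) (hε : 0 < ε) :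
    ∃ k : ℕ, 0 < k ∧ C * (1 + Real.log k + Real.log F) / ε ^ 3 ≤ k := by
  set A' : ℝ := C / ε ^ 3 with hA'def
  have hA' : 0 ≤ A' := div_nonneg hC (by positivity)
  set B' : ℝ := A' * (1 + Real.log F) with hB'def
  have hB' : 0 ≤ B' := mul_nonneg hA' (by nlinarith [Real.log_nonneg hF])
  refine ⟨⌈2 * B'⌉₊ + ⌈16 * A' ^ 2⌉₊ + 1, by omega, ?_⟩
  set k : ℕ := ⌈2 * B'⌉₊ + ⌈16 * A' ^ 2⌉₊ + 1 with hkdef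
  have hk1 : (1 : ℝ) ≤ (k : ℝ) := by
    have : (1 : ℕ) ≤ k := by omega
    exact_mod_cast this
  have hk0 : (0 : ℝ) ≤ (k : ℝ) := by linarith
  have hkB : 2 * B' ≤ (k : ℝ) := by
    have h1 := Nat.le_ceil (2 * B')
    have h2 : (⌈2 * B'⌉₊ : ℝ) ≤ (k : ℝ) := by
      have : ⌈2 * B'⌉₊ ≤ k := by omega
      exact_mod_cast this
    linarith
  have hkA : 16 * A' ^ 2 ≤ (k : ℝ) := by
    have h1 := Nat.le_ceil (16 * A' ^ 2)
    have h2 : (⌈16 * A' ^ 2⌉₊ : ℝ) ≤ (k : ℝ) := by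
      have : ⌈16 * A' ^ 2⌉₊ ≤ k := by omega
      exact_mod_cast this
    linarith
  have hsqrt : 4 * A' ≤ Real.sqrt k :=
    (Real.le_sqrt (by linarith) hk0).mpr (by nlinarith)
  have hsqrtpos : 0 < Real.sqrt k := Real.sqrt_pos.mpr (by linarith)
  have hlog : Real.log k ≤ 2 * Real.sqrt k := by
    have h1 : Real.log (Real.sqrt k) = Real.log k / 2 := Real.log_sqrt hk0
    have h2 : Real.log (Real.sqrt k) ≤ Real.sqrt k - 1 :=
      Real.log_le_sub_one_of_pos hsqrtpos
    linarith
  have hrw : C * (1 + Real.log k + Real.log F) / ε ^ 3 = B' + A' * Real.log k := by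
    rw [hB'def, hA'def]
    ring
  rw [hrw]
  have hlogk0 : 0 ≤ Real.log k := Real.log_nonneg hk1
  have e1 : A' * Real.log k ≤ A' * (2 * Real.sqrt k) :=
    mul_le_mul_of_nonneg_left hlog hA'
  have e2 : 4 * A' * Real.sqrt k ≤ Real.sqrt k * Real.sqrt k :=
    mul_le_mul_of_nonneg_right hsqrt (Real.sqrt_nonneg _)
  have e3 : Real.sqrt k * Real.sqrt k = (k : ℝ) := Real.mul_self_sqrt hk0
  linarith

lemma eps_k_bound (d h k : ℕ) (ε : ℝ) (hε : ε ∈ Set.Ioo (0 : ℝ) (1/2)) (hk0 : 0 < k)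
    (hk : (2886000 * d ^ 5 * (Nat.factorial (2 * h + 3)) *
      (1 + Real.log k + Real.log (Nat.factorial (2 * h + 3))) / ε ^ 3 : ℝ) ≤ k) :
    (2 * d * (h + 1) : ℝ) ≤ ε * k := by
  obtain ⟨hε0, hε2⟩ := hε
  set F : ℕ := Nat.factorial (2 * h + 3) with hFdef
  have hF1 : (1 : ℝ) ≤ (F : ℝ) := by
    have := Nat.factorial_pos (2 * h + 3)
    exact_mod_cast this
  set C : ℝ := 2886000 * (d : ℝ) ^ 5 * (F : ℝ) with hCdef
  have hC0 : 0 ≤ C := by positivity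
  have hε3 : (0:ℝ) < ε ^ 3 := by positivity
  have hlogk : 0 ≤ Real.log k := Real.log_nonneg (by exact_mod_cast hk0)
  have hlogF : 0 ≤ Real.log F := Real.log_nonneg hF1
  have hnum : C ≤ C * (1 + Real.log k + Real.log F) := by nlinarith
  have h1 : C / ε ^ 3 ≤ (k : ℝ) := le_trans ((div_le_div_iff_of_pos_right hε3).mpr hnum) hk
  have h2 : C ≤ (k : ℝ) * ε ^ 3 := (div_le_iff₀ hε3).mp h1
  have hC4 : (2 * d * (h + 1) : ℝ) ≤ 4 * C := by
    have hnat : 2 * d * (h + 1) ≤ 4 * (2886000 * d ^ 5 * F) := by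
      have hd5 : d ≤ d ^ 5 := Nat.le_self_pow (by norm_num) d
      have hhF : h + 1 ≤ F := le_trans (by omega) (Nat.self_le_factorial (2 * h + 3))
      calc 2 * d * (h + 1) ≤ 2 * (d ^ 5) * F := by
            exact Nat.mul_le_mul (Nat.mul_le_mul_left 2 hd5) hhF
        _ ≤ 4 * (2886000 * d ^ 5 * F) := by nlinarith
    calc (2 * d * (h + 1) : ℝ) ≤ (4 * (2886000 * d ^ 5 * F) : ℕ) := by exact_mod_cast hnat
      _ = 4 * C := by push_cast [hCdef]; ring
  have hk0' : (0 : ℝ) ≤ (k : ℝ) := Nat.cast_nonneg k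
  have h3 : 4 * ((k:ℝ) * ε ^ 3) ≤ ε * k := by
    nlinarith [mul_nonneg (mul_nonneg hk0' hε0.le) (show (0:ℝ) ≤ 1/4 - ε^2 by nlinarith)]
  linarith

end Numeric

/-- hyperfiniteness of bounded-degree bounded-treewidth graphs: for every
`ε ∈ (0, 1/2)` there is a positive integer `k` depending only on `d`, `h`, `ε` — namely any
`k` satisfying `k ≥ 2886000·d⁵·(2h+3)!·(1 + log k + log((2h+3)!))/ε³`, and such `k` exists —
for which `V` can be partitioned into parts of size at most `k` with at most `ε·|V|` edges
of `G` joining distinct parts. -/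
theorem treewidth_hyperfinite {V : Type} [Fintype V] (G : SimpleGraph V)
    (d h : ℕ) (hdeg : ∀ v : V, (G.neighborSet v).ncard ≤ d)
    (htw : HasTreewidthLE G h)
    (ε : ℝ) (hε : ε ∈ Set.Ioo (0 : ℝ) (1/2)) :
    (∃ k : ℕ, 0 < k ∧
      (2886000 * d ^ 5 * (Nat.factorial (2 * h + 3)) *
        (1 + Real.log k + Real.log (Nat.factorial (2 * h + 3))) / ε ^ 3 : ℝ) ≤ k) ∧
    (∀ k : ℕ, 0 < k →
      (2886000 * d ^ 5 * (Nat.factorial (2 * h + 3)) *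
        (1 + Real.log k + Real.log (Nat.factorial (2 * h + 3))) / ε ^ 3 : ℝ) ≤ k →
      ∃ f : V → Set V,
        (∀ v : V, v ∈ f v) ∧
        (∀ v : V, ∀ w ∈ f v, f v = f w) ∧
        (∀ v : V, (f v).ncard ≤ k) ∧
        ({e ∈ G.edgeSet | ∃ v w : V, e = s(v, w) ∧ f v ≠ f w}.ncard : ℝ) ≤
          ε * (Fintype.card V : ℝ)) := by
  classical
  constructor
  · -- existence of a good k
    have hF1 : (1 : ℝ) ≤ ((Nat.factorial (2 * h + 3) : ℕ) : ℝ) := by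
      have := Nat.factorial_pos (2 * h + 3)
      exact_mod_cast this
    exact exists_good_k (2886000 * (d : ℝ) ^ 5 * (Nat.factorial (2 * h + 3) : ℝ)) _ ε
      (by positivity) hF1 hε.1
  · intro k hk0 hk
    rcases Nat.eq_zero_or_pos d with hd0 | hd1
    · -- no edges at all: use singletons
      refine ⟨fun v => {v}, fun v => rfl, ?_, ?_, ?_⟩
      · intro v w hw
        simp only [Set.mem_singleton_iff] at hw
        rw [hw]
      · intro v
        simp [Set.ncard_singleton]
        omega
      · have hempty : {e ∈ G.edgeSet | ∃ v w : V, e = s(v, w) ∧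
            ({v} : Set V) ≠ {w}} = ∅ := by
          ext e
          simp only [Set.mem_setOf_eq, Set.mem_empty_iff_false, iff_false, not_and]
          rintro heE ⟨v, w, rfl, -⟩
          have hadj : G.Adj v w := heE
          have hw : w ∈ G.neighborSet v := hadj
          have h0 : (G.neighborSet v).ncard = 0 := by
            have := hdeg v
            omega
          rw [Set.ncard_eq_zero (Set.toFinite _)] at h0
          rw [h0] at hw
          exact hw
        rw [hempty]
        simp only [Set.ncard_empty, Nat.cast_zero]
        exact mul_nonneg hε.1.le (Nat.cast_nonneg _)
    · -- main case
      obtain ⟨m, bags, T, ⟨hA, hcov, hedge, hconn⟩, hbag⟩ := htw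
      have hεk : (2 * d * (h + 1) : ℝ) ≤ ε * k := eps_k_bound d h k ε hε hk0 hk
      have hkh : 2 * (h + 1) ≤ k := by
        have hd1' : (1 : ℝ) ≤ (d : ℝ) := by exact_mod_cast hd1
        have hεhalf : ε ≤ 1/2 := hε.2.le
        have hkr : (2 * (h + 1) : ℝ) ≤ (k : ℝ) := by
          have h1 : (2 * (h + 1) : ℝ) ≤ 2 * d * (h + 1) := by nlinarith
          have h2 : ε * k ≤ (1/2) * k := by
            have : (0:ℝ) ≤ (k:ℝ) := Nat.cast_nonneg k
            nlinarith
          linarith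
        exact_mod_cast hkr
      obtain ⟨p, B, hp1, hp2, hp3, hp4, hB1, hB2, hB3⟩ :=
        mainrec G bags T hA hcov hedge hconn h k hbag hkh
          (Set.univ : Set V).ncard Set.univ le_rfl
      refine ⟨p, fun v => hp1 v trivial, ?_, fun v => hp4 v trivial, ?_⟩
      · intro v w hw
        exact (hp3 v trivial w hw).symm
      · set Ecut := {e ∈ G.edgeSet | ∃ v w : V, e = s(v, w) ∧ p v ≠ p w} with hEcutdef
        have hsub : Ecut ⊆ ⋃ b ∈ B, G.incidenceSet b := by
          rintro e ⟨heE, v, w, rfl, hne⟩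
          have hadj : G.Adj v w := heE
          rcases hB3 v w trivial trivial hadj hne with hb | hb
          · exact Set.mem_biUnion hb ⟨heE, Sym2.mem_mk_left v w⟩
          · exact Set.mem_biUnion hb ⟨heE, Sym2.mem_mk_right v w⟩
        have hcount : Ecut.ncard ≤ B.ncard * d := by
          calc Ecut.ncard ≤ (⋃ b ∈ B, G.incidenceSet b).ncard :=
                Set.ncard_le_ncard hsub (Set.toFinite _)
            _ ≤ B.ncard * d :=
                ncard_biUnion_le_mul _ d (incidence_ncard_le G d hdeg) B
        have huniv : (Set.univ : Set V).ncard = Fintype.card V := by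
          rw [Set.ncard_univ, Nat.card_eq_fintype_card]
        -- real-number chain
        have hE : (Ecut.ncard : ℝ) ≤ (B.ncard : ℝ) * d := by exact_mod_cast hcount
        have hkB : (k : ℝ) * B.ncard ≤ 2 * (h + 1) * Fintype.card V := by
          rw [← huniv]
          exact_mod_cast hB2
        have hkpos : (0 : ℝ) < k := by exact_mod_cast hk0
        have hd0' : (0 : ℝ) ≤ d := Nat.cast_nonneg d
        have hn0 : (0 : ℝ) ≤ (Fintype.card V : ℝ) := Nat.cast_nonneg _
        have hB0 : (0 : ℝ) ≤ (B.ncard : ℝ) := Nat.cast_nonneg _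
        have hmul1 : (Ecut.ncard : ℝ) * k ≤ (B.ncard : ℝ) * d * k :=
          mul_le_mul_of_nonneg_right hE hkpos.le
        have hmul2 : (d : ℝ) * ((k : ℝ) * B.ncard) ≤ (d : ℝ) * (2 * (h + 1) * Fintype.card V) :=
          mul_le_mul_of_nonneg_left hkB hd0'
        have hmul3 : (2 * d * (h + 1) : ℝ) * Fintype.card V ≤ (ε * k) * Fintype.card V :=
          mul_le_mul_of_nonneg_right hεk hn0
        nlinarith
end

section
/- Let G = (V, E) be a finite simple graph with maximum degree bounded by d, and let (X, T) be an edge-overlapping and minimal tree decomposition of G. For every node Y of T, each subtree of T created by removing Y from T witnesses some edge of G incident to a vertex of Y that is not witnessed by any of the other subtrees created by removing Y; consequently the number of such subtrees is at most the number of edges of G incident to vertices of Y. -/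
/-- `l` lies in the same connected component as `j` in the forest `T` with the node `i`
removed (i.e. in the subtree created by removing `i` that contains `j`). -/
def SameComponentAvoiding {m : ℕ} (T : SimpleGraph (Fin m)) (i j l : Fin m) : Prop :=
  ∃ (hj : j ∈ ({i}ᶜ : Set (Fin m))) (hl : l ∈ ({i}ᶜ : Set (Fin m))),
    (T.induce ({i}ᶜ : Set (Fin m))).Reachable ⟨j, hj⟩ ⟨l, hl⟩

namespace MDW

open SimpleGraph

variable {α : Type*} {T : SimpleGraph α}

/-- inclusion hom from an induced subgraph -/
def inclHom (T : SimpleGraph α) (s : Set α) : T.induce s →g T :=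
  ⟨Subtype.val, fun h => h⟩

lemma walk_of_induce_reachable {s : Set α} {a b : α} {ha : a ∈ s} {hb : b ∈ s}
    (h : (T.induce s).Reachable ⟨a, ha⟩ ⟨b, hb⟩) :
    ∃ w : T.Walk a b, ∀ v ∈ w.support, v ∈ s := by
  obtain ⟨p⟩ := h
  have key : ∀ v ∈ (p.map (inclHom T s)).support, v ∈ s := by
    intro v hv
    rw [Walk.support_map, List.mem_map] at hv
    obtain ⟨u, _, rfl⟩ := hv
    exact u.2
  exact ⟨p.map (inclHom T s), key⟩

lemma induce_reachable_of_walk {s : Set α} {a b : α} (ha : a ∈ s) (hb : b ∈ s)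
    (w : T.Walk a b) (hw : ∀ v ∈ w.support, v ∈ s) :
    (T.induce s).Reachable ⟨a, ha⟩ ⟨b, hb⟩ := by
  induction w with
  | nil => rfl
  | @cons u c b h p ih =>
      have hc : c ∈ s := hw c (by simp)
      refine Reachable.trans ?_ (ih hc hb (fun v hv => hw v (by simp [hv])))
      exact Adj.reachable (by exact h : (T.induce s).Adj ⟨u, ha⟩ ⟨c, hc⟩)

lemma avoid_vertex_walk {s : Set α} {k : α}
    (hk1 : ∀ w ∈ s, ∀ w' ∈ s, T.Adj k w → T.Adj k w' → w = w') :
    ∀ n : ℕ, ∀ {a b : α} (w : T.Walk a b), w.length ≤ n → a ≠ k → b ≠ k →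
      (∀ v ∈ w.support, v ∈ s) →
      ∃ w' : T.Walk a b, ∀ v ∈ w'.support, v ∈ s ∧ v ≠ k := by
  intro n
  induction n with
  | zero =>
      intro a b w hlen ha hb hw
      cases w with
      | nil => exact ⟨Walk.nil, by simpa using ⟨hw a (by simp), ha⟩⟩
      | cons h p => simp [Walk.length_cons] at hlen
  | succ n ih =>
      intro a b w hlen ha hb hw
      cases w with
      | nil => exact ⟨Walk.nil, by simpa using ⟨hw a (by simp), ha⟩⟩
      | @cons _ c _ h p =>
          by_cases hc : c = k
          · subst hc
            cases p with
            | nil => exact absurd rfl hb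
            | @cons _ c2 _ h2 p2 =>
                have hac2 : a = c2 :=
                  hk1 a (hw a (by simp)) c2 (hw c2 (by simp)) h.symm h2
                have ha2 : c2 = a := hac2.symm
                have hlen2 : p2.length ≤ n := by
                  simp [Walk.length_cons] at hlen; omega
                obtain ⟨w', hw'⟩ := ih (p2.copy ha2 rfl)
                  (by simpa using hlen2) ha hb
                  (fun v hv => hw v (by simp at hv ⊢; tauto))
                exact ⟨w', hw'⟩
          · have hlen1 : p.length ≤ n := by
              simp [Walk.length_cons] at hlen; omega
            obtain ⟨w', hw'⟩ := ih p hlen1 hc hb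
              (fun v hv => hw v (by simp [hv]))
            refine ⟨Walk.cons h w', ?_⟩
            intro v hv
            rcases (by simpa using hv : v = a ∨ v ∈ w'.support) with rfl | hv
            · exact ⟨hw v (by simp), ha⟩
            · exact hw' v hv

lemma connected_induce_diff {s : Set α} {k : α}
    (hconn : (T.induce s).Connected)
    (hk1 : ∀ w ∈ s, ∀ w' ∈ s, T.Adj k w → T.Adj k w' → w = w')
    (hne : (s \ {k}).Nonempty) :
    (T.induce (s \ {k})).Connected := by
  rw [SimpleGraph.connected_iff]
  refine ⟨?_, ?_⟩
  · rintro ⟨A, hA⟩ ⟨B, hB⟩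
    have hAs : A ∈ s := hA.1
    have hBs : B ∈ s := hB.1
    obtain ⟨w, hw⟩ := walk_of_induce_reachable (hconn.preconnected ⟨A, hAs⟩ ⟨B, hBs⟩)
    obtain ⟨w', hw'⟩ := avoid_vertex_walk hk1 w.length w le_rfl hA.2 hB.2 hw
    exact induce_reachable_of_walk hA hB w'
      (fun v hv => ⟨(hw' v hv).1, (hw' v hv).2⟩)
  · obtain ⟨a, ha⟩ := hne
    exact ⟨⟨a, ha⟩⟩

lemma exists_leaf_aux [DecidableEq α] (hac : T.IsAcyclic) {s : Set α} {i j : α}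
    (hi : i ∈ s) (hj : j ∈ s) (hij : T.Adj i j) :
    ∀ n : ℕ,
      (∃ k ∈ s, k ≠ i ∧ ∀ w ∈ s, ∀ w' ∈ s, T.Adj k w → T.Adj k w' → w = w') ∨
      (∃ (b : α) (p : T.Walk i b), p.IsPath ∧ p.length = n + 1 ∧ ∀ v ∈ p.support, v ∈ s) := by
  intro n
  induction n with
  | zero =>
      right
      refine ⟨j, Walk.cons hij Walk.nil, ?_, by simp, ?_⟩
      · simp [Walk.isPath_def, hij.ne]
      · intro v hv
        rcases (by simpa using hv : v = i ∨ v = j) with rfl | rfl <;> assumption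
  | succ n ih =>
      rcases ih with h | ⟨b, p, hp, hlen, hsupp⟩
      · exact Or.inl h
      have hbs : b ∈ s := hsupp b p.end_mem_support
      have hbi : b ≠ i := by
        rintro rfl
        rw [Walk.isPath_iff_eq_nil] at hp
        simp [hp] at hlen
      -- penultimate vertex
      have hnnil : ¬ p.reverse.Nil := by
        rw [Walk.nil_iff_length_eq, Walk.length_reverse, hlen]; simp
      rw [Walk.not_nil_iff] at hnnil
      obtain ⟨c, hbc, q, hq⟩ := hnnil
      have hqpath : q.IsPath ∧ b ∉ q.support := by
        have := hp.reverse
        rw [hq, Walk.cons_isPath_iff] at this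
        exact ⟨this.1, this.2⟩
      by_cases hleaf : ∀ w ∈ s, ∀ w' ∈ s, T.Adj b w → T.Adj b w' → w = w'
      · exact Or.inl ⟨b, hbs, hbi, hleaf⟩
      push_neg at hleaf
      obtain ⟨w, hws, w', hw's, hbw, hbw', hww'⟩ := hleaf
      -- pick a neighbor distinct from c
      obtain ⟨w0, hw0s, hbw0, hw0c⟩ : ∃ w0 ∈ s, T.Adj b w0 ∧ w0 ≠ c := by
        by_cases hwc : w = c
        · exact ⟨w', hw's, hbw', by rintro rfl; exact hww' hwc⟩
        · exact ⟨w, hws, hbw, hwc⟩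
      by_cases hmem : w0 ∈ p.support
      · -- contradiction via path uniqueness
        exfalso
        have hw0q : w0 ∈ q.support := by
          have : w0 ∈ p.reverse.support := by rwa [Walk.support_reverse, List.mem_reverse]
          rw [hq] at this
          rcases (by simpa using this : w0 = b ∨ w0 ∈ q.support) with rfl | h
          · exact (hbw0.ne rfl).elim
          · exact h
        set P2 : T.Walk b w0 := Walk.cons hbc (q.takeUntil w0 hw0q) with hP2
        have hP2path : P2.IsPath := by
          rw [hP2, Walk.cons_isPath_iff]
          exact ⟨hqpath.1.takeUntil hw0q,
            fun hmem' => hqpath.2 (q.support_takeUntil_subset hw0q hmem')⟩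
        set P1 : T.Walk b w0 := Walk.cons hbw0 Walk.nil with hP1
        have hP1path : P1.IsPath := by simp [hP1, Walk.isPath_def, hbw0.ne]
        have := hac.path_unique ⟨P1, hP1path⟩ ⟨P2, hP2path⟩
        have hPeq : P1 = P2 := congrArg Subtype.val this
        have hc2 : c ∈ P2.support := by
          rw [hP2, Walk.support_cons]
          exact List.mem_cons_of_mem _ (Walk.start_mem_support _)
        rw [← hPeq, hP1] at hc2
        rcases (by simpa using hc2 : c = b ∨ c = w0) with rfl | rfl
        · exact hbc.ne rfl
        · exact hw0c rfl
      · -- extend the path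
        right
        refine ⟨w0, p.concat hbw0, ?_, ?_, ?_⟩
        · rw [← Walk.isPath_reverse_iff, Walk.reverse_concat, Walk.cons_isPath_iff]
          exact ⟨hp.reverse, by rwa [Walk.support_reverse, List.mem_reverse]⟩
        · rw [Walk.length_concat, hlen]
        · intro v hv
          rw [Walk.support_concat, List.mem_append] at hv
          rcases hv with h | h
          · exact hsupp v h
          · simp at h; exact h ▸ hw0s

lemma exists_leaf [Fintype α] [DecidableEq α] (hac : T.IsAcyclic) {s : Set α} {i j : α}
    (hi : i ∈ s) (hj : j ∈ s) (hij : T.Adj i j) :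
    ∃ k ∈ s, k ≠ i ∧ ∀ w ∈ s, ∀ w' ∈ s, T.Adj k w → T.Adj k w' → w = w' := by
  rcases exists_leaf_aux hac hi hj hij (Fintype.card α) with h | ⟨b, p, hp, hlen, _⟩
  · exact h
  · have := hp.length_lt
    omega

lemma walks_disjoint (hac : T.IsAcyclic) {i j j' l : α}
    (hij : T.Adj i j) (hij' : T.Adj i j') (hjj' : j ≠ j')
    (w1 : T.Walk j l) (h1 : ∀ v ∈ w1.support, v ≠ i)
    (w2 : T.Walk j' l) (h2 : ∀ v ∈ w2.support, v ≠ i) : False := by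
  classical
  set w : T.Walk j j' := w1.append w2.reverse with hw
  have hwi : ∀ v ∈ w.support, v ≠ i := by
    intro v hv
    rw [hw, Walk.mem_support_append_iff] at hv
    rcases hv with h | h
    · exact h1 v h
    · exact h2 v (by rwa [Walk.support_reverse, List.mem_reverse] at h)
  set P2 : T.Walk j j' := w.toPath.val with hP2
  have hP2i : ∀ v ∈ P2.support, v ≠ i := fun v hv => hwi v (w.support_toPath_subset hv)
  set P1 : T.Walk j j' := Walk.cons hij.symm (Walk.cons hij' Walk.nil) with hP1
  have hP1path : P1.IsPath := by
    simp [hP1, Walk.isPath_def, hij.ne', hij'.ne, hjj']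
  have := hac.path_unique ⟨P1, hP1path⟩ w.toPath
  have hPeq : P1 = P2 := congrArg Subtype.val this
  have : i ∈ P2.support := by
    rw [← hPeq, hP1]; simp
  exact hP2i i this rfl

lemma sc_iff {m : ℕ} (T : SimpleGraph (Fin m)) (i j l : Fin m) :
    SameComponentAvoiding T i j l ↔
      j ≠ i ∧ l ≠ i ∧ ∃ w : T.Walk j l, ∀ v ∈ w.support, v ≠ i := by
  constructor
  · rintro ⟨hj, hl, hr⟩
    refine ⟨hj, hl, ?_⟩
    obtain ⟨w, hw⟩ := walk_of_induce_reachable hr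
    exact ⟨w, fun v hv => hw v hv⟩
  · rintro ⟨hj, hl, w, hw⟩
    exact ⟨hj, hl, induce_reachable_of_walk (s := ({i}ᶜ : Set (Fin m))) hj hl w
      (fun v hv => hw v hv)⟩

end MDW

/-- the counting argument in Lemma 5 of the paper: for an
edge-overlapping and minimal tree decomposition `(bags, T)` of a graph `G` of maximum
degree at most `d`, and any node `i`, each subtree created by removing `i` from `T`
(parameterized by the neighbor `j` of `i` it contains; in a forest distinct neighbors lie
in distinct subtrees) witnesses some edge of `G` incident to a vertex of `bags i` that is
witnessed by no node outside that subtree (other than possibly `i` itself); the assignment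
of edges to subtrees is injective, so the number of such subtrees is at most the number of
edges of `G` incident to vertices of `bags i`. -/
theorem minimal_decomposition_unique_witness {V : Type} [Fintype V] [DecidableEq V]
    (G : SimpleGraph V) (d : ℕ) (hdeg : ∀ v : V, (G.neighborSet v).ncard ≤ d)
    (m : ℕ) (bags : Fin m → Finset V) (T : SimpleGraph (Fin m))
    (htd : IsTreeDecomposition G bags T)
    (hoverlap : ∀ i j : Fin m, T.Adj i j → ((bags i : Set V) ∩ (bags j : Set V)).Nonempty)
    (hminimal : ∀ i : Fin m, ∀ x ∈ bags i,
      ¬ IsTreeDecomposition G (Function.update bags i ((bags i).erase x)) T) :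
    ∀ i : Fin m, ∃ e : T.neighborSet i → Sym2 V,
      Function.Injective e ∧
      (∀ j : T.neighborSet i,
        e j ∈ G.edgeSet ∧
        (∃ x ∈ bags i, x ∈ e j) ∧
        (∃ l : Fin m, SameComponentAvoiding T i (j : Fin m) l ∧ ∀ x ∈ e j, x ∈ bags l) ∧
        (∀ l : Fin m, l ≠ i → ¬ SameComponentAvoiding T i (j : Fin m) l →
          ¬ ∀ x ∈ e j, x ∈ bags l)) ∧
      (T.neighborSet i).ncard ≤
        {e' : Sym2 V | e' ∈ G.edgeSet ∧ ∃ x ∈ bags i, x ∈ e'}.ncard := by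
  classical
  open MDW SimpleGraph in
  obtain ⟨hac, hcover, hedge, hconn⟩ := htd
  intro i
  have key : ∀ j : Fin m, T.Adj i j → ∃ (x y : V) (k : Fin m),
      G.Adj x y ∧ x ∈ bags i ∧ x ∈ bags k ∧ y ∈ bags k ∧
      SameComponentAvoiding T i j k ∧
      ∀ l : Fin m, x ∈ bags l → y ∈ bags l → l = k := by
    intro j hij
    obtain ⟨x, hx⟩ := hoverlap i j hij
    have hxi : x ∈ bags i := hx.1
    have hxj : x ∈ bags j := hx.2
    set Bx : Set (Fin m) := {l | x ∈ bags l} with hBx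
    set S : Set (Fin m) := {l | x ∈ bags l ∧ (l = i ∨ SameComponentAvoiding T i j l)}
      with hS
    have hiS : i ∈ S := ⟨hxi, Or.inl rfl⟩
    have hjS : j ∈ S := by
      refine ⟨hxj, Or.inr ?_⟩
      rw [MDW.sc_iff]
      exact ⟨hij.ne', hij.ne', Walk.nil, by simp [hij.ne']⟩
    -- the part of the tree of bags containing x lying in the branch of j is connected
    have hSconn : (T.induce S).Connected := by
      rw [SimpleGraph.connected_iff]
      refine ⟨?_, ⟨⟨i, hiS⟩⟩⟩
      rintro ⟨a, haS⟩ ⟨b, hbS⟩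
      obtain ⟨w, hw⟩ :=
        MDW.walk_of_induce_reachable ((hconn x).preconnected ⟨a, haS.1⟩ ⟨b, hbS.1⟩)
      set p : T.Walk a b := w.toPath.val with hp
      have hppath : p.IsPath := w.toPath.2
      have hpsupp : ∀ v ∈ p.support, x ∈ bags v :=
        fun v hv => hw v (w.support_toPath_subset hv)
      have hSsup : ∀ v ∈ p.support, v ∈ S := by
        intro v hv
        refine ⟨hpsupp v hv, ?_⟩
        by_cases hvi : v = i
        · exact Or.inl hvi
        right
        rw [MDW.sc_iff]
        refine ⟨hij.ne', hvi, ?_⟩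
        by_cases hq1 : i ∈ (p.takeUntil v hv).support
        · -- i occurs before v; go through b
          have hq2 : i ∉ (p.dropUntil v hv).support := by
            intro h2
            have hsplit := p.take_spec hv
            have hnod : p.support.Nodup := hppath.support_nodup
            rw [← hsplit, Walk.support_append, List.nodup_append] at hnod
            have hiv : i ∈ (p.dropUntil v hv).support.tail := by
              have hcons := (p.dropUntil v hv).support_eq_cons
              rw [hcons] at h2
              rcases List.mem_cons.mp h2 with h2 | h2
              · exact absurd h2.symm hvi
              · exact h2
            exact hnod.2.2 i hq1 i hiv rfl
          have hbi : b ≠ i := by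
            rintro rfl
            exact hq2 (Walk.end_mem_support _)
          have hSCb := hbS.2.resolve_left hbi
          rw [MDW.sc_iff] at hSCb
          obtain ⟨_, _, wb, hwb⟩ := hSCb
          refine ⟨wb.append (p.dropUntil v hv).reverse, ?_⟩
          intro u hu
          rw [Walk.mem_support_append_iff] at hu
          rcases hu with h | h
          · exact hwb u h
          · rw [Walk.support_reverse, List.mem_reverse] at h
            exact fun he => hq2 (he ▸ h)
        · -- path from a to v avoids i
          have hai : a ≠ i := by
            rintro rfl
            exact hq1 (Walk.start_mem_support _)
          have hSCa := haS.2.resolve_left hai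
          rw [MDW.sc_iff] at hSCa
          obtain ⟨_, _, wa, hwa⟩ := hSCa
          refine ⟨wa.append (p.takeUntil v hv), ?_⟩
          intro u hu
          rw [Walk.mem_support_append_iff] at hu
          rcases hu with h | h
          · exact hwa u h
          · exact fun he => hq1 (he ▸ h)
      exact MDW.induce_reachable_of_walk haS hbS p hSsup
    -- a leaf of the subtree S distinct from i
    obtain ⟨k, hkS, hki, hkleaf⟩ := MDW.exists_leaf hac hiS hjS hij
    have hSCk : SameComponentAvoiding T i j k := hkS.2.resolve_left hki
    have hxk : x ∈ bags k := hkS.1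
    -- k is also a leaf of the tree of bags containing x
    have hkleafB : ∀ w ∈ Bx, ∀ w' ∈ Bx, T.Adj k w → T.Adj k w' → w = w' := by
      have hBxS : ∀ w : Fin m, x ∈ bags w → T.Adj k w → w ∈ S := by
        intro w hxw hkw
        refine ⟨hxw, ?_⟩
        by_cases hwi : w = i
        · exact Or.inl hwi
        · right
          rw [MDW.sc_iff] at hSCk ⊢
          obtain ⟨hji, hki', wk, hwk⟩ := hSCk
          refine ⟨hji, hwi, wk.concat hkw, ?_⟩
          intro v hv
          rw [Walk.support_concat, List.mem_append] at hv
          rcases hv with h | h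
          · exact hwk v h
          · simp at h; exact h ▸ hwi
      intro w hw w' hw' h1 h2
      exact hkleaf w (hBxS w hw h1) w' (hBxS w' hw' h2) h1 h2
    have hBconn' : (T.induce (Bx \ {k})).Connected :=
      MDW.connected_induce_diff (hconn x) hkleafB
        ⟨i, hxi, by simp only [Set.mem_singleton_iff]; exact fun h => hki h.symm⟩
    -- minimality applied to removing x from bag k
    have hmin := hminimal k x hxk
    set bags' : Fin m → Finset V := Function.update bags k ((bags k).erase x) with hbags'
    have hik : (i : Fin m) ≠ k := fun h => hki h.symm
    have hvertex' : ∀ v : V, ∃ l, v ∈ bags' l := by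
      intro v
      by_cases hvx : v = x
      · subst hvx
        exact ⟨i, by rw [hbags', Function.update_of_ne hik]; exact hxi⟩
      · obtain ⟨l, hl⟩ := hcover v
        by_cases hlk : l = k
        · subst hlk
          refine ⟨l, ?_⟩
          rw [hbags', Function.update_self]
          exact Finset.mem_erase.mpr ⟨hvx, hl⟩
        · exact ⟨l, by rw [hbags', Function.update_of_ne hlk]; exact hl⟩
    have hset : ∀ v : V, v ≠ x → {l : Fin m | v ∈ bags' l} = {l : Fin m | v ∈ bags l} := by
      intro v hvx
      ext l
      simp only [Set.mem_setOf_eq, hbags']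
      by_cases hlk : l = k
      · subst hlk; rw [Function.update_self]; simp [Finset.mem_erase, hvx]
      · rw [Function.update_of_ne hlk]
    have hsetx : {l : Fin m | x ∈ bags' l} = Bx \ {k} := by
      ext l
      simp only [Set.mem_setOf_eq, hbags', Set.mem_diff, Set.mem_singleton_iff]
      by_cases hlk : l = k
      · subst hlk; rw [Function.update_self]; simp
      · rw [Function.update_of_ne hlk]
        exact ⟨fun h => ⟨h, hlk⟩, fun h => h.1⟩
    have hconn' : ∀ v : V, (T.induce {l : Fin m | v ∈ bags' l}).Connected := by
      intro v
      by_cases hvx : v = x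
      · subst hvx; rw [hsetx]; exact hBconn'
      · rw [hset v hvx]; exact hconn v
    have hnedge : ¬ ∀ u v : V, G.Adj u v → ∃ l, u ∈ bags' l ∧ v ∈ bags' l := by
      intro h
      exact hmin ⟨hac, hvertex', h, hconn'⟩
    push_neg at hnedge
    obtain ⟨u, v, huv, hno⟩ := hnedge
    have huniq : ∀ l : Fin m, u ∈ bags l → v ∈ bags l → l = k := by
      intro l hul hvl
      by_contra hlk
      exact hno l (by rw [hbags', Function.update_of_ne hlk]; exact hul)
        (by rw [hbags', Function.update_of_ne hlk]; exact hvl)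
    obtain ⟨l0, hul0, hvl0⟩ := hedge u v huv
    have hl0k : l0 = k := huniq l0 hul0 hvl0
    have huk : u ∈ bags k := by rw [← hl0k]; exact hul0
    have hvk : v ∈ bags k := by rw [← hl0k]; exact hvl0
    have hxor : u = x ∨ v = x := by
      by_contra hcon
      push_neg at hcon
      refine hno k ?_ ?_
      · rw [hbags', Function.update_self]
        exact Finset.mem_erase.mpr ⟨hcon.1, huk⟩
      · rw [hbags', Function.update_self]
        exact Finset.mem_erase.mpr ⟨hcon.2, hvk⟩
    rcases hxor with hux | hvx
    · exact ⟨x, v, k, hux ▸ huv, hxi, hxk, hvk, hSCk,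
        fun l h1 h2 => huniq l (by rw [hux]; exact h1) h2⟩
    · exact ⟨x, u, k, hvx ▸ huv.symm, hxi, hxk, huk, hSCk,
        fun l h1 h2 => huniq l h2 (by rw [hvx]; exact h1)⟩
  -- choose data for each neighbor
  choose xf yf kf hadj hxibag hxk hyk hsc huniq using
    fun j : ↥(T.neighborSet i) => key j.1 j.2
  have hinj : Function.Injective (fun j : ↥(T.neighborSet i) => s(xf j, yf j)) := by
    intro j j' hE
    by_contra hne
    simp only at hE
    have h1 : xf j' ∈ s(xf j, yf j) := hE ▸ Sym2.mem_mk_left _ _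
    have h2 : yf j' ∈ s(xf j, yf j) := hE ▸ Sym2.mem_mk_right _ _
    rw [Sym2.mem_iff] at h1 h2
    have hm1 : xf j' ∈ bags (kf j) := by
      rcases h1 with h | h
      · rw [h]; exact hxk j
      · rw [h]; exact hyk j
    have hm2 : yf j' ∈ bags (kf j) := by
      rcases h2 with h | h
      · rw [h]; exact hxk j
      · rw [h]; exact hyk j
    have hkk : kf j = kf j' := huniq j' (kf j) hm1 hm2
    have s1 := hsc j
    rw [hkk] at s1
    have s2 := hsc j'
    rw [MDW.sc_iff] at s1 s2
    obtain ⟨_, _, w1, h1'⟩ := s1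
    obtain ⟨_, _, w2, h2'⟩ := s2
    have hjj : (j : Fin m) ≠ (j' : Fin m) := fun h => hne (Subtype.ext h)
    exact MDW.walks_disjoint hac j.2 j'.2 hjj w1 h1' w2 h2'
  refine ⟨fun j => s(xf j, yf j), hinj, ?_, ?_⟩
  · intro j
    refine ⟨hadj j, ⟨xf j, hxibag j, Sym2.mem_mk_left _ _⟩,
      ⟨kf j, hsc j, ?_⟩, ?_⟩
    · intro z hz
      rw [Sym2.mem_iff] at hz
      rcases hz with rfl | rfl
      · exact hxk j
      · exact hyk j
    · intro l hli hnsc hall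
      have h1 := hall (xf j) (Sym2.mem_mk_left _ _)
      have h2 := hall (yf j) (Sym2.mem_mk_right _ _)
      have hlk := huniq j l h1 h2
      exact hnsc (hlk ▸ hsc j)
  · -- the counting conclusion
    rcases Set.eq_empty_or_nonempty (T.neighborSet i) with hemp | ⟨j0, hj0⟩
    · rw [hemp]; simp
    · set dflt : Sym2 V := s(xf ⟨j0, hj0⟩, xf ⟨j0, hj0⟩) with hdflt
      refine Set.ncard_le_ncard_of_injOn
        (fun a => if h : a ∈ T.neighborSet i then s(xf ⟨a, h⟩, yf ⟨a, h⟩) else dflt)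
        ?_ ?_ (Set.toFinite _)
      · intro a ha
        simp only [dif_pos ha]
        exact ⟨hadj ⟨a, ha⟩, ⟨xf ⟨a, ha⟩, hxibag ⟨a, ha⟩, Sym2.mem_mk_left _ _⟩⟩
      · intro a ha a' ha' hE
        simp only [dif_pos ha, dif_pos ha'] at hE
        have := hinj hE
        exact congrArg Subtype.val this
end
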